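/- Sequential Chamberlin–Courant approval voting (seqCCAV) fails participation: there exist a candidate set C, a committee size k, an approval profile A, and a voter i ∈ N_A such that f(A_{-i},k) ≻_i f(A,k). -/
import Mathlib


/-- An approval profile is a multiset of approval ballots (anonymous encoding):
each ballot is a nonempty subset of the candidates, and the electorate is nonempty. -/
def validProfile {C : Type*} [DecidableEq C] (A : Multiset (Finset C)) : Prop :=
  A ≠ 0 ∧ ∀ b ∈ A, b ≠ (∅ : Finset C)

/-- Kelly's extension, weak preference. -/
def KellyWeak {C : Type*} [DecidableEq C] (b : Finset C) (X Y : Set (Finset C)) : Prop :=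
  ∀ W ∈ X, ∀ W' ∈ Y, (W' ∩ b).card ≤ (W ∩ b).card

/-- Kelly's extension, strict preference. -/
def KellyStrict {C : Type*} [DecidableEq C] (b : Finset C) (X Y : Set (Finset C)) : Prop :=
  KellyWeak b X Y ∧ ∃ W ∈ X, ∃ W' ∈ Y, (W' ∩ b).card < (W ∩ b).card

/-- The Thiele score `ŝ(A,W) = Σ_{i ∈ N_A} s(|A_i ∩ W|)` of a committee `W`. -/
def thieleScore {C : Type*} [DecidableEq C] (s : ℕ → ℚ) (A : Multiset (Finset C))
    (W : Finset C) : ℚ :=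
  (A.map fun b => s (b ∩ W).card).sum

/-- `seqThieleValid s A P L`: the sequence `L` is a valid continuation of the partial
committee `P` for the sequential Thiele rule induced by `s`: each entry maximizes the
Thiele score of the extended partial committee. -/
def seqThieleValid {C : Type*} [DecidableEq C] (s : ℕ → ℚ) (A : Multiset (Finset C)) :
    Finset C → List C → Prop
  | _, [] => True
  | P, c :: rest =>
      c ∉ P ∧
      (∀ x : C, x ∉ P → thieleScore s A (insert x P) ≤ thieleScore s A (insert c P)) ∧
      seqThieleValid s A (insert c P) rest

/-- The sequential Thiele rule induced by the scoring function `s`. -/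
def seqThiele {C : Type*} [DecidableEq C] (s : ℕ → ℚ) (A : Multiset (Finset C))
    (k : ℕ) : Set (Finset C) :=
  {W | ∃ L : List C, L.toFinset = W ∧ L.length = k ∧ seqThieleValid s A ∅ L}

/-- The CCAV scoring function: `s(x) = 1` for all `x ≥ 1` and `s(0) = 0`. -/
def ccavScore : ℕ → ℚ := fun x => if x = 0 then 0 else 1

/-- ℕ-valued coverage score: the number of ballots meeting the committee `W`. -/
def cov {C : Type*} [DecidableEq C] (A : Multiset (Finset C)) (W : Finset C) : ℕ :=
  (A.filter fun b => (b ∩ W).card ≠ 0).card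

lemma thieleScore_eq_cov {C : Type*} [DecidableEq C] (A : Multiset (Finset C)) (W : Finset C) :
    thieleScore ccavScore A W = (cov A W : ℚ) := by
  induction A using Multiset.induction_on with
  | empty => simp [thieleScore, cov]
  | cons a t ih =>
      simp only [thieleScore, cov, Multiset.map_cons, Multiset.sum_cons,
        Multiset.filter_cons, ccavScore, Finset.card_eq_zero] at *
      by_cases h : a ∩ W = ∅
      · simp [h, ih]
      · simp [h, ih, add_comm]

/-- ℕ-valued analogue of `seqThieleValid` for the CCAV score. -/
def covValid {C : Type*} [DecidableEq C] (A : Multiset (Finset C)) :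
    Finset C → List C → Prop
  | _, [] => True
  | P, c :: rest =>
      c ∉ P ∧
      (∀ x : C, x ∉ P → cov A (insert x P) ≤ cov A (insert c P)) ∧
      covValid A (insert c P) rest

instance covValidDec {C : Type*} [DecidableEq C] [Fintype C]
    (A : Multiset (Finset C)) : ∀ (P : Finset C) (L : List C), Decidable (covValid A P L)
  | _, [] => .isTrue trivial
  | P, c :: rest =>
      haveI := covValidDec A (insert c P) rest
      decidable_of_iff (c ∉ P ∧
        (∀ x : C, x ∉ P → cov A (insert x P) ≤ cov A (insert c P)) ∧
        covValid A (insert c P) rest) (by simp [covValid])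

lemma seqThieleValid_iff_covValid {C : Type*} [DecidableEq C] (A : Multiset (Finset C)) :
    ∀ (L : List C) (P : Finset C), (seqThieleValid ccavScore A P L ↔ covValid A P L)
  | [], P => Iff.rfl
  | c :: rest, P => by
      simp only [seqThieleValid, covValid, thieleScore_eq_cov, Nat.cast_le,
        seqThieleValid_iff_covValid A rest]

/-- The reduced profile: the full profile minus the ballot `{0,1}`. -/
def profB : Multiset (Finset (Fin 4)) := {{0},{1},{2},{0,2},{1,3},{2,3}}

/-- On the reduced profile, the unique seqCCAV outcome is `{0,1,2}`. -/
lemma covValid_profB_unique : ∀ c1 c2 c3 : Fin 4, covValid profB ∅ [c1,c2,c3] →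
    [c1,c2,c3].toFinset = ({0,1,2} : Finset (Fin 4)) := by decide

/-- seqCCAV fails participation: there are a candidate set, a committee size, a
profile, and a voter who strictly benefits from abstaining (w.r.t. Kelly's
extension). -/
theorem seqCCAV_fails_participation :
    ∃ (m k : ℕ) (A : Multiset (Finset (Fin m))) (b : Finset (Fin m)),
      1 ≤ k ∧ k < m ∧ validProfile A ∧ b ∈ A ∧
      KellyStrict b (seqThiele ccavScore (A.erase b) k) (seqThiele ccavScore A k) := by
  refine ⟨4, 3, {{0},{1},{2},{0,1},{0,2},{1,3},{2,3}}, {0,1},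
    by norm_num, by norm_num, ⟨by decide, by decide⟩, by decide, ?_⟩
  have herase : (({{0},{1},{2},{0,1},{0,2},{1,3},{2,3}} :
      Multiset (Finset (Fin 4))).erase {0,1}) = profB := by decide
  rw [herase]
  have hX : ∀ W ∈ seqThiele ccavScore profB 3, W = ({0,1,2} : Finset (Fin 4)) := by
    rintro W ⟨L, hLW, hlen, hval⟩
    rw [seqThieleValid_iff_covValid] at hval
    match L, hlen with
    | [c1, c2, c3], _ =>
        rw [← hLW]
        exact covValid_profB_unique c1 c2 c3 hval
  constructor
  · intro W hW W' _
    rw [hX W hW]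
    have h1 : (W' ∩ ({0,1} : Finset (Fin 4))).card ≤ ({0,1} : Finset (Fin 4)).card :=
      Finset.card_le_card Finset.inter_subset_right
    have h2 : (({0,1,2} : Finset (Fin 4)) ∩ {0,1}).card = 2 := by decide
    have h3 : ({0,1} : Finset (Fin 4)).card = 2 := by decide
    omega
  · refine ⟨{0,1,2}, ⟨[2,1,0], by decide, rfl,
      by rw [seqThieleValid_iff_covValid]; decide⟩,
      {0,2,3}, ⟨[0,3,2], by decide, rfl,
      by rw [seqThieleValid_iff_covValid]; decide⟩, by decide⟩
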